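/- Let λ₁,…,λ_k be real numbers with |λ_i| < 1 and s₁,…,s_k integers, and set S = |s₁+⋯+s_k|. Then the limit as n → ∞ of (1/n)∑_{i₁,…,i_k=1}^n λ₁^{|i₁-i₂-s₁|} λ₂^{|i₂-i₃-s₂|} ⋯ λ_k^{|i_k-i₁-s_k|} exists and equals B_S = ∑_{m₁+⋯+m_k=S} λ₁^{|m₁|}⋯λ_k^{|m_k|}. -/

import Mathlib

open Filter Finset

lemma summable_int_pow {r : ℝ} (h0 : 0 ≤ r) (h1 : r < 1) :
    Summable (fun z : ℤ => r ^ z.natAbs) := by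
  apply Summable.of_nat_of_neg <;> simpa using summable_geometric_of_lt_one h0 h1

lemma summable_pi_pow {k : ℕ} (r : Fin k → ℝ) (h0 : ∀ p, 0 ≤ r p) (h1 : ∀ p, r p < 1) :
    Summable (fun m : Fin k → ℤ => ∏ p, r p ^ (m p).natAbs) := by
  have hsum : ∀ p, Summable (fun z : ℤ => r p ^ z.natAbs) := fun p =>
    summable_int_pow (h0 p) (h1 p)
  have hnn : ∀ (p : Fin k) (z : ℤ), 0 ≤ r p ^ z.natAbs := fun p z => pow_nonneg (h0 p) _
  apply summable_of_sum_le (c := ∏ p, (∑' z : ℤ, r p ^ z.natAbs))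
  · intro m
    exact Finset.prod_nonneg fun p _ => hnn p _
  · intro u
    calc ∑ m ∈ u, ∏ p, r p ^ (m p).natAbs
        ≤ ∑ m ∈ Fintype.piFinset (fun p => u.image (fun m => m p)),
            ∏ p, r p ^ (m p).natAbs := by
          apply Finset.sum_le_sum_of_subset_of_nonneg
          · intro m hm
            rw [Fintype.mem_piFinset]
            exact fun p => Finset.mem_image_of_mem _ hm
          · intro m _ _
            exact Finset.prod_nonneg fun p _ => hnn p _
      _ = ∏ p, ∑ z ∈ u.image (fun m => m p), r p ^ z.natAbs := by
          rw [Finset.prod_univ_sum]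
      _ ≤ ∏ p, (∑' z : ℤ, r p ^ z.natAbs) := by
          apply Finset.prod_le_prod
          · intro p _
            exact Finset.sum_nonneg fun z _ => hnn p _
          · intro p _
            exact Summable.sum_le_tsum _ (fun z _ => hnn p _) (hsum p)

section Path
open Fin.NatCast
variable {K : ℕ} (d : Fin (K + 1) → ℤ)

/-- partial sums of `d` -/
noncomputable def pathT : Fin (K + 1) → ℤ := fun p => ∑ j ∈ Finset.range p.val, d j

lemma pathT_zero : pathT d 0 = 0 := by simp [pathT]

lemma pathT_succ (q : Fin K) :
    pathT d q.succ = pathT d q.castSucc + d q.castSucc := by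
  have h1 : (q.succ : Fin (K+1)).val = q.castSucc.val + 1 := by simp
  rw [pathT, pathT, h1, Finset.sum_range_succ]
  congr 1
  exact congrArg d (Fin.cast_val_eq_self q.castSucc)

lemma pathT_rel (hd : ∑ p, d p = 0) (p : Fin (K + 1)) :
    pathT d (finRotate (K + 1) p) - pathT d p = d p := by
  rcases Fin.eq_castSucc_or_eq_last p with ⟨q, rfl⟩ | rfl
  · rw [finRotate_succ_apply, Fin.coeSucc_eq_succ, pathT_succ]
    ring
  · have h0 : finRotate (K + 1) (Fin.last K) = 0 := by
      rw [finRotate_succ_apply]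
      exact Fin.last_add_one K
    have hK : ((K : ℕ) : Fin (K + 1)) = Fin.last K := by
      have := Fin.cast_val_eq_self (Fin.last K)
      simpa using this
    have hsum : ∑ p, d p = pathT d (Fin.last K) + d (Fin.last K) := by
      rw [show (∑ p, d p) = ∑ j ∈ Finset.range (K + 1), d j from ?_,
        Finset.sum_range_succ, pathT, hK]
      · rfl
      · rw [← Fin.sum_univ_eq_sum_range (fun j => d (j : Fin (K+1))) (K+1)]
        exact Finset.sum_congr rfl fun q _ => congrArg d (Fin.cast_val_eq_self q).symm
    rw [h0, pathT_zero]
    rw [hd] at hsum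
    linarith

lemma fiber_iff (hd : ∑ p, d p = 0) (i : Fin (K + 1) → ℤ) :
    (∀ p, i p - i (finRotate (K + 1) p) = d p) ↔ (∀ p, i p = i 0 - pathT d p) := by
  constructor
  · intro h p
    induction p using Fin.induction with
    | zero => rw [pathT_zero]; ring
    | succ q ih =>
        have h1 : i q.succ = i q.castSucc - d q.castSucc := by
          have := h q.castSucc
          rw [finRotate_succ_apply, Fin.coeSucc_eq_succ] at this
          linarith
        rw [h1, ih, pathT_succ]
        ring
  · intro h p
    rw [h p, h (finRotate (K + 1) p)]
    have := pathT_rel d hd p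
    linarith

lemma fiber_card (hd : ∑ p, d p = 0) (n : ℕ) :
    ((Fintype.piFinset fun _ : Fin (K+1) => Finset.Icc (1:ℤ) n).filter
       (fun i => ∀ p, i p - i (finRotate (K+1) p) = d p)).card
    = (Finset.Icc (1 + (Finset.univ.image (pathT d)).max' (Finset.Nonempty.image ⟨0, Finset.mem_univ _⟩ _))
        ((n:ℤ) + (Finset.univ.image (pathT d)).min' (Finset.Nonempty.image ⟨0, Finset.mem_univ _⟩ _))).card := by
  set T := Finset.univ.image (pathT d) with hT
  have hTne : T.Nonempty := Finset.Nonempty.image ⟨0, Finset.mem_univ _⟩ _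
  set M := T.max' hTne
  set L := T.min' hTne
  have htM : ∀ p, pathT d p ≤ M := fun p => Finset.le_max' _ _ (Finset.mem_image_of_mem _ (Finset.mem_univ p))
  have htL : ∀ p, L ≤ pathT d p := fun p => Finset.min'_le _ _ (Finset.mem_image_of_mem _ (Finset.mem_univ p))
  apply Finset.card_bij' (fun i _ => i 0) (fun c _ => fun p => c - pathT d p)
  · intro i hi
    rw [Finset.mem_filter, Fintype.mem_piFinset] at hi
    obtain ⟨hbox, hrel⟩ := hi
    have hval := (fiber_iff d hd i).1 hrel
    have hb : ∀ p, 1 ≤ i p ∧ i p ≤ n := fun p => Finset.mem_Icc.1 (hbox p)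
    rw [Finset.mem_Icc]
    constructor
    · have : M ≤ i 0 - 1 := Finset.max'_le _ _ _ (by
        rintro b hb'
        rw [hT] at hb'
        obtain ⟨p, _, rfl⟩ := Finset.mem_image.1 hb'
        have := (hb p).1
        rw [hval p] at this
        linarith)
      linarith
    · have : i 0 - n ≤ L := Finset.le_min' _ _ _ (by
        rintro b hb'
        rw [hT] at hb'
        obtain ⟨p, _, rfl⟩ := Finset.mem_image.1 hb'
        have := (hb p).2
        rw [hval p] at this
        linarith)
      linarith
  · intro c hc
    rw [Finset.mem_Icc] at hc
    rw [Finset.mem_filter, Fintype.mem_piFinset]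
    constructor
    · intro p
      rw [Finset.mem_Icc]
      constructor
      · have := htM p; linarith [hc.1]
      · have := htL p; linarith [hc.2]
    · refine (fiber_iff d hd _).2 fun p => ?_
      rw [pathT_zero]
      ring
  · intro i hi
    rw [Finset.mem_filter] at hi
    have hval := (fiber_iff d hd i).1 hi.2
    funext p
    rw [hval p]
  · intro c _
    show c - pathT d 0 = c
    rw [pathT_zero]
    ring

lemma fiber_card_le (hd : ∑ p, d p = 0) (n : ℕ) :
    ((Fintype.piFinset fun _ : Fin (K+1) => Finset.Icc (1:ℤ) n).filter
       (fun i => ∀ p, i p - i (finRotate (K+1) p) = d p)).card ≤ n := by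
  rw [fiber_card d hd n, Int.card_Icc]
  set T := Finset.univ.image (pathT d) with hT
  have hTne : T.Nonempty := Finset.Nonempty.image ⟨0, Finset.mem_univ _⟩ _
  have h0 : pathT d 0 ∈ T := Finset.mem_image_of_mem _ (Finset.mem_univ _)
  have hLM : T.min' hTne ≤ T.max' hTne :=
    le_trans (Finset.min'_le _ _ h0) (Finset.le_max' _ _ h0)
  rw [Int.toNat_le]
  push_cast
  linarith

lemma fiber_card_ge (hd : ∑ p, d p = 0) (n : ℕ) :
    (n : ℤ) - ((Finset.univ.image (pathT d)).max' (Finset.Nonempty.image ⟨0, Finset.mem_univ _⟩ _)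
        - (Finset.univ.image (pathT d)).min' (Finset.Nonempty.image ⟨0, Finset.mem_univ _⟩ _))
      ≤ (((Fintype.piFinset fun _ : Fin (K+1) => Finset.Icc (1:ℤ) n).filter
       (fun i => ∀ p, i p - i (finRotate (K+1) p) = d p)).card : ℤ) := by
  rw [fiber_card d hd n, Int.card_Icc]
  set M := (Finset.univ.image (pathT d)).max' _
  set L := (Finset.univ.image (pathT d)).min' _
  calc (n : ℤ) - (M - L) ≤ (n : ℤ) + L + 1 - (1 + M) := by linarith
    _ ≤ (((n : ℤ) + L + 1 - (1 + M)).toNat : ℤ) := Int.self_le_toNat _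

end Path

set_option maxHeartbeats 1600000 in
/-- The main limit: (1/n)·∑_{i₁,…,i_k=1}^n ∏_p λ_p^{|i_p - i_{p+1} - s_p|} → B_S,
with indices cyclic and S = |s₁+⋯+s_k|. -/
theorem stmt6 (k : ℕ) (hk : 2 ≤ k) (lam : Fin k → ℝ)
    (hlam : ∀ i, |lam i| < 1) (s : Fin k → ℤ) :
    Tendsto (fun n : ℕ =>
        (1 / (n : ℝ)) *
          ∑ i ∈ Fintype.piFinset (fun _ : Fin k => Finset.Icc (1 : ℤ) n),
            ∏ p, lam p ^ (i p - i (finRotate k p) - s p).natAbs)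
      atTop
      (nhds (∑' m : {f : Fin k → ℤ // ∑ i, f i = |∑ i, s i|},
        ∏ i, lam i ^ ((m : Fin k → ℤ) i).natAbs)) := by
  obtain ⟨K, rfl⟩ : ∃ K, k = K + 1 := ⟨k - 1, by omega⟩
  classical
  set σ : ℤ := ∑ p, s p with hσ
  set ε : ℤ := if σ ≤ 0 then 1 else -1 with hε
  have hε2 : ε * ε = 1 := by rcases le_or_gt σ 0 with h | h <;> simp [hε, h, not_le.2]
  have hεabs : ∀ x : ℤ, (ε * x).natAbs = x.natAbs := by
    intro x
    rcases le_or_gt σ 0 with h | h <;> simp [hε, h, not_le.2, Int.natAbs_neg]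
  have hεneg : ε * (-σ) = |σ| := by
    rcases le_or_gt σ 0 with h | h
    · rw [hε, if_pos h, one_mul, abs_of_nonpos h]
    · rw [hε, if_neg (not_le.2 h), abs_of_pos h]; ring
  -- total map Ψ into the subtype
  have hΨsum : ∀ i : Fin (K + 1) → ℤ,
      ∑ p, ε * (i p - i (finRotate (K + 1) p) - s p) = |σ| := by
    intro i
    rw [← Finset.mul_sum]
    have h1 : ∑ p, (i p - i (finRotate (K + 1) p) - s p)
        = (∑ p, i p) - (∑ p, i (finRotate (K + 1) p)) - σ := by
      rw [hσ]
      rw [Finset.sum_sub_distrib, Finset.sum_sub_distrib]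
    rw [h1, Equiv.sum_comp (finRotate (K + 1)) i]
    simpa using hεneg
  set β := {f : Fin (K + 1) → ℤ // ∑ p, f p = |∑ p, s p|} with hβ
  set Ψ : (Fin (K + 1) → ℤ) → β :=
    fun i => ⟨fun p => ε * (i p - i (finRotate (K + 1) p) - s p), hΨsum i⟩ with hΨ
  set g : β → ℝ := fun m => ∏ p, lam p ^ (m.1 p).natAbs with hg
  set G : β → ℝ := fun m => ∏ p, |lam p| ^ (m.1 p).natAbs with hG
  set box : ℕ → Finset (Fin (K + 1) → ℤ) :=
    fun n => Fintype.piFinset fun _ : Fin (K + 1) => Finset.Icc (1 : ℤ) n with hbox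
  set c : ℕ → β → ℕ := fun n m => ((box n).filter (fun i => Ψ i = m)).card with hc
  set f : ℕ → β → ℝ := fun n m => (c n m : ℝ) / n * g m with hf
  -- Step 1 : rewrite
  have step1 : ∀ n : ℕ,
      (1 / (n : ℝ)) * ∑ i ∈ box n, ∏ p, lam p ^ (i p - i (finRotate (K + 1) p) - s p).natAbs
        = ∑' m : β, f n m := by
    intro n
    have hgΨ : ∀ i, (∏ p, lam p ^ (i p - i (finRotate (K + 1) p) - s p).natAbs) = g (Ψ i) := by
      intro i
      rw [hg]
      exact Finset.prod_congr rfl fun p _ => by rw [hΨ]; simp only [hεabs]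
    have hfib : ∑ i ∈ box n, g (Ψ i)
        = ∑ m ∈ (box n).image Ψ, ∑ i ∈ (box n).filter (fun i => Ψ i = m), g (Ψ i) := by
      exact (Finset.sum_fiberwise_of_maps_to (fun i hi => Finset.mem_image_of_mem _ hi) _).symm
    have hzero : ∀ m : β, m ∉ (box n).image Ψ → f n m = 0 := by
      intro m hm
      have : (box n).filter (fun i => Ψ i = m) = ∅ := by
        rw [Finset.filter_eq_empty_iff]
        intro i hi hΨi
        exact hm (hΨi ▸ Finset.mem_image_of_mem _ hi)
      rw [hf]
      simp [hc, this]
    rw [tsum_eq_sum hzero]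
    rw [Finset.sum_congr rfl (fun i _ => hgΨ i), hfib, Finset.mul_sum]
    apply Finset.sum_congr rfl
    intro m _
    have hinner : ∑ i ∈ (box n).filter (fun i => Ψ i = m), g (Ψ i)
        = (c n m : ℝ) * g m := by
      rw [Finset.sum_congr rfl (fun i hi => by
        rw [(Finset.mem_filter.1 hi).2]), Finset.sum_const, hc, nsmul_eq_mul]
    rw [hinner, hf]
    ring
  -- Step 2 : summability of the bound
  have step2 : Summable G := by
    have := (summable_pi_pow (fun p => |lam p|) (fun p => abs_nonneg _) hlam).subtype
      {f : Fin (K + 1) → ℤ | ∑ p, f p = |∑ p, s p|}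
    exact this
  -- fiber data
  have hdd : ∀ m : β, ∑ p, (ε * m.1 p + s p) = 0 := by
    intro m
    rw [Finset.sum_add_distrib, ← Finset.mul_sum, m.2, ← hσ]
    have : ε * |σ| = -σ := by
      rcases le_or_gt σ 0 with h | h
      · rw [hε, if_pos h, one_mul, abs_of_nonpos h]
      · rw [hε, if_neg (not_le.2 h), abs_of_pos h]; ring
    rw [this]; ring
  have hfilterm : ∀ (m : β) (n : ℕ), (box n).filter (fun i => Ψ i = m)
      = (box n).filter (fun i => ∀ p, i p - i (finRotate (K + 1) p) = ε * m.1 p + s p) := by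
    intro m n
    apply Finset.filter_congr
    intro i _
    constructor
    · intro h p
      have h1 := congrArg (fun x => x.1 p) h
      simp only [hΨ] at h1
      have h2 : i p - i (finRotate (K + 1) p) - s p
          = ε * (ε * (i p - i (finRotate (K + 1) p) - s p)) := by
        rw [← mul_assoc, hε2, one_mul]
      rw [h1] at h2
      linarith
    · intro h
      rw [hΨ]
      apply Subtype.ext
      funext p
      show ε * (i p - i (finRotate (K + 1) p) - s p) = m.1 p
      have h2 : i p - i (finRotate (K + 1) p) = ε * m.1 p + s p := h p
      have h3 : ε * (i p - i (finRotate (K + 1) p) - s p) = ε * (ε * m.1 p) := by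
        rw [h2]; ring
      rw [h3, ← mul_assoc, hε2, one_mul]
  have hcle : ∀ (n : ℕ) (m : β), c n m ≤ n := by
    intro n m
    rw [hc]
    simp only
    rw [hfilterm m n]
    exact fiber_card_le _ (hdd m) n
  -- Step 3 : pointwise convergence
  have step3 : ∀ m : β, Tendsto (fun n => f n m) atTop (nhds (g m)) := by
    intro m
    set d : Fin (K + 1) → ℤ := fun p => ε * m.1 p + s p with hd'
    have hd : ∑ p, d p = 0 := by
      rw [hd']
      rw [Finset.sum_add_distrib, ← Finset.mul_sum, m.2, ← hσ]
      have : ε * |σ| = -σ := by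
        rcases le_or_gt σ 0 with h | h
        · rw [hε, if_pos h, one_mul, abs_of_nonpos h]
        · rw [hε, if_neg (not_le.2 h), abs_of_pos h]; ring
      rw [this]; ring
    have hfilter : ∀ n, (box n).filter (fun i => Ψ i = m)
        = (box n).filter (fun i => ∀ p, i p - i (finRotate (K + 1) p) - s p = ε * m.1 p) := by
      intro n
      apply Finset.filter_congr
      intro i _
      constructor
      · intro h p
        have := congrArg (fun x => x.1 p) h
        simp only [hΨ] at this
        calc i p - i (finRotate (K + 1) p) - s p
            = ε * (ε * (i p - i (finRotate (K + 1) p) - s p)) := by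
              rw [← mul_assoc, hε2, one_mul]
          _ = ε * m.1 p := by rw [this]
      · intro h
        rw [hΨ]
        apply Subtype.ext
        funext p
        show ε * (i p - i (finRotate (K + 1) p) - s p) = m.1 p
        rw [h p, ← mul_assoc, hε2, one_mul]
    have hcount : ∀ n, c n m
        = (Finset.Icc (1 + (Finset.univ.image (pathT d)).max' (Finset.Nonempty.image ⟨0, Finset.mem_univ _⟩ _))
            ((n:ℤ) + (Finset.univ.image (pathT d)).min' (Finset.Nonempty.image ⟨0, Finset.mem_univ _⟩ _))).card := by
      intro n
      rw [hc]
      simp only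
      rw [hfilter n]
      rw [← fiber_card d hd n]
      congr 1
      apply Finset.filter_congr
      intro i _
      constructor
      · intro h p
        show i p - i (finRotate (K + 1) p) = ε * m.1 p + s p
        have := h p
        linarith
      · intro h p
        have h2 : i p - i (finRotate (K + 1) p) = ε * m.1 p + s p := h p
        linarith
    set T := Finset.univ.image (pathT d) with hT
    have hTne : T.Nonempty := Finset.Nonempty.image ⟨0, Finset.mem_univ _⟩ _
    set M := T.max' hTne with hM
    set L := T.min' hTne with hL
    have h0T : pathT d 0 ∈ T := Finset.mem_image_of_mem _ (Finset.mem_univ _)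
    have hLM : L ≤ M := le_trans (Finset.min'_le _ _ h0T) (Finset.le_max' _ _ h0T)
    have hub : ∀ n : ℕ, (c n m : ℝ) ≤ n := by
      intro n
      rw [hcount n, Int.card_Icc]
      have h1 : ((n : ℤ) + L + 1 - (1 + M)).toNat ≤ n := by
        rw [Int.toNat_le]
        push_cast
        linarith
      exact_mod_cast h1
    have hlb : ∀ n : ℕ, (n : ℝ) - ((M - L).toNat : ℝ) ≤ (c n m : ℝ) := by
      intro n
      rw [hcount n, Int.card_Icc]
      have h1 : (n : ℤ) - (M - L).toNat ≤ ((n : ℤ) + L + 1 - (1 + M)).toNat := by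
        calc (n : ℤ) - (M - L).toNat ≤ (n : ℤ) + L + 1 - (1 + M) := by
              have := Int.self_le_toNat (M - L)
              push_cast
              linarith
          _ ≤ ((n : ℤ) + L + 1 - (1 + M)).toNat := Int.self_le_toNat _
      exact_mod_cast h1
    have hratio : Tendsto (fun n : ℕ => (c n m : ℝ) / n) atTop (nhds 1) := by
      apply tendsto_of_tendsto_of_tendsto_of_le_of_le'
        (g := fun n : ℕ => 1 - ((M - L).toNat : ℝ) / n) (h := fun _ : ℕ => (1 : ℝ))
      · have h0 : Tendsto (fun n : ℕ => ((M - L).toNat : ℝ) / n) atTop (nhds 0) :=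
          Tendsto.div_atTop tendsto_const_nhds tendsto_natCast_atTop_atTop
        simpa using (tendsto_const_nhds (x := (1:ℝ))).sub h0
      · exact tendsto_const_nhds
      · filter_upwards [eventually_ge_atTop 1] with n hn
        have hn' : (0 : ℝ) < n := by exact_mod_cast hn
        have heq : 1 - ((M - L).toNat : ℝ) / n = ((n : ℝ) - ((M - L).toNat : ℝ)) / n := by
          field_simp
        rw [heq, div_le_div_iff_of_pos_right hn']
        exact hlb n
      · filter_upwards [eventually_ge_atTop 1] with n hn
        have hn' : (0 : ℝ) < n := by exact_mod_cast hn
        rw [div_le_one hn']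
        exact hub n
    have : Tendsto (fun n : ℕ => (c n m : ℝ) / n * g m) atTop (nhds (1 * g m)) :=
      hratio.mul_const _
    rw [one_mul] at this
    exact this
  -- Step 4 : domination
  have step4 : ∀ᶠ n in atTop, ∀ m : β, ‖f n m‖ ≤ G m := by
    filter_upwards [eventually_ge_atTop 1] with n hn
    intro m
    have hn' : (0 : ℝ) < n := by exact_mod_cast hn
    have hcle' : (c n m : ℝ) ≤ n := by exact_mod_cast hcle n m
    have h1 : ‖f n m‖ = (c n m : ℝ) / n * |g m| := by
      rw [hf]
      simp only [norm_mul, Real.norm_eq_abs, abs_div]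
      rw [abs_of_nonneg (Nat.cast_nonneg (c n m)), abs_of_nonneg hn'.le]
    have h2 : |g m| = G m := by
      rw [hg, hG, Finset.abs_prod]
      exact Finset.prod_congr rfl fun p _ => by rw [abs_pow]
    rw [h1, h2]
    have h3 : (c n m : ℝ) / n ≤ 1 := by rw [div_le_one hn']; exact hcle' 
    have h4 : 0 ≤ G m := Finset.prod_nonneg fun p _ => pow_nonneg (abs_nonneg _) _
    calc (c n m : ℝ) / n * G m ≤ 1 * G m := by
          apply mul_le_mul_of_nonneg_right h3 h4
      _ = G m := one_mul _
  -- Conclusion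
  have main := tendsto_tsum_of_dominated_convergence step2 step3 step4
  have hfun : (fun n : ℕ =>
      (1 / (n : ℝ)) * ∑ i ∈ Fintype.piFinset (fun _ : Fin (K+1) => Finset.Icc (1 : ℤ) n),
        ∏ p, lam p ^ (i p - i (finRotate (K+1) p) - s p).natAbs)
      = fun n : ℕ => ∑' m : β, f n m := funext step1
  rw [hfun]
  exact main
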